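/- Let Σ be a symmetric positive definite p×p matrix, B symmetric with 0 ⪯ B ⪯ 2Σ. Then the 2p×2p block matrix G = [[Σ, Σ−B],[Σ−B, Σ]] is positive semidefinite. -/

import Mathlib

open Matrix
open scoped MatrixOrder

theorem knockoff_aux (p : ℕ) (A : Matrix (Fin p) (Fin p) ℝ) (hA : A.PosSemidef) (s : ℝ)
    (hs : s*s = 1) : (fromBlocks A (s•A) (s•A) A).PosSemidef := by
  have hH : (CFC.sqrt A)ᵀ * CFC.sqrt A = A := by
    rw [← conjTranspose_eq_transpose_of_trivial, (CFC.sqrt_nonneg A).posSemidef.isHermitian.eq,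
      CFC.sqrt_mul_sqrt_self A hA.nonneg]
  have : fromBlocks A (s•A) (s•A) A =
      (fromBlocks (CFC.sqrt A) (s•CFC.sqrt A) 0 0)ᴴ * (fromBlocks (CFC.sqrt A) (s•CFC.sqrt A) 0 0) := by
    rw [fromBlocks_conjTranspose, fromBlocks_multiply]
    simp [conjTranspose_eq_transpose_of_trivial, hH, smul_smul, hs, Matrix.smul_mul,
      Matrix.mul_smul]
  rw [this]
  exact posSemidef_conjTranspose_mul_self _

theorem knockoff_smul {n : Type*} [Fintype n] {M : Matrix n n ℝ} (hM : M.PosSemidef)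
    {c : ℝ} (hc : 0 ≤ c) : (c • M).PosSemidef := by
  refine ⟨by simp only [Matrix.IsHermitian, conjTranspose_smul, star_trivial, hM.1.eq], fun x => ?_⟩
  convert mul_nonneg hc (hM.2 x) using 1
  rw [Finsupp.mul_sum]
  refine Finsupp.sum_congr fun i _ => ?_
  rw [Finsupp.mul_sum]
  refine Finsupp.sum_congr fun j _ => ?_
  simp only [Matrix.smul_apply, smul_eq_mul]
  ring

/-- If `Σ ≻ 0`, `0 ⪯ B ⪯ 2Σ`, then the block matrix `[[Σ, Σ−B],[Σ−B, Σ]]`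
is positive semidefinite. -/
theorem knockoff_gram_posSemidef (p : ℕ) (Sig B : Matrix (Fin p) (Fin p) ℝ)
    (hSig : Sig.PosDef) (hB : B.PosSemidef) (h2 : (2 • Sig - B).PosSemidef) :
    (Matrix.fromBlocks Sig (Sig - B) (Sig - B) Sig).PosSemidef := by
  have h1 := knockoff_aux p (2 • Sig - B) h2 1 (by norm_num)
  have hm := knockoff_aux p B hB (-1) (by norm_num)
  have key : Matrix.fromBlocks Sig (Sig - B) (Sig - B) Sig =
      (2⁻¹ : ℝ) • (fromBlocks (2 • Sig - B) ((1:ℝ) • (2 • Sig - B)) ((1:ℝ) • (2 • Sig - B))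
        (2 • Sig - B) + fromBlocks B ((-1:ℝ) • B) ((-1:ℝ) • B) B) := by
    ext i j
    cases i <;> cases j <;>
      simp only [Matrix.fromBlocks, Matrix.of_apply, Sum.elim_inl, Sum.elim_inr,
        Matrix.add_apply, Matrix.smul_apply, Matrix.sub_apply, smul_eq_mul, one_mul, neg_one_mul, Matrix.neg_apply] <;> ring
  rw [key]
  exact knockoff_smul (h1.add hm) (by norm_num)
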